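/- Fix a prime ℓ and an integer m ≥ 0, and for each n let P(j|n) denote the probability that a uniformly random alternating n×n matrix over F_2 has kernel of dimension j (with ℓ = 2). Then lim_{n→∞} Σ_{j=0}^{n} 2^{mj} · P(j|n) = Σ_{j=0}^{m} gr_2(j, m) · 2^{j(j+1)/2}, where gr_2(j, m) is the number of j-dimensional subspaces of F_2^m. -/

import Mathlib

/-- An alternating matrix over `𝔽₂`: symmetric with zero diagonal. -/
def IsAlt2 {n : ℕ} (T : Matrix (Fin n) (Fin n) (ZMod 2)) : Prop :=
  T.IsSymm ∧ ∀ i, T i i = 0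

open Finset Function Matrix Submodule



/-- pairs i<j in Fin n ≃ Σ j, Fin j -/
def ltPairEquiv (n : ℕ) : {p : Fin n × Fin n // p.1 < p.2} ≃ (j : Fin n) × Fin j.1 where
  toFun p := ⟨p.1.2, ⟨p.1.1.1, p.2⟩⟩
  invFun x := ⟨(⟨x.2.1, x.2.2.trans x.1.2⟩, x.1), x.2.2⟩
  left_inv p := by ext <;> rfl
  right_inv x := by rcases x with ⟨j, k⟩; rfl

lemma card_ltPair (n : ℕ) : Nat.card {p : Fin n × Fin n // p.1 < p.2} = n.choose 2 := by
  rw [Nat.card_congr (ltPairEquiv n), Nat.card_eq_fintype_card, Fintype.card_sigma]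
  simp only [Fintype.card_fin]
  rw [Fin.sum_univ_eq_sum_range (fun i => i), Finset.sum_range_id, Nat.choose_two_right]

noncomputable def altEquiv (n : ℕ) :
    {T : Matrix (Fin n) (Fin n) (ZMod 2) // IsAlt2 T} ≃
      ({p : Fin n × Fin n // p.1 < p.2} → ZMod 2) where
  toFun T p := T.1 p.1.1 p.1.2
  invFun f := ⟨fun i j => if h : i < j then f ⟨(i,j), h⟩ else if h' : j < i then f ⟨(j,i), h'⟩ else 0,
    by
      constructor
      · ext i j
        show (if h : j < i then f ⟨(j,i), h⟩ else if h' : i < j then f ⟨(i,j), h'⟩ else 0) =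
          (if h : i < j then f ⟨(i,j), h⟩ else if h' : j < i then f ⟨(j,i), h'⟩ else 0)
        rcases lt_trichotomy i j with h | h | h
        · rw [dif_neg (asymm h), dif_pos h, dif_pos h]
        · subst h; rfl
        · rw [dif_pos h, dif_neg (asymm h), dif_pos h]
      · intro i
        simp⟩
  left_inv T := by
    ext i j
    rcases lt_trichotomy i j with h | h | h
    · simp [dif_pos h]
    · subst h; simp [(T.2.2 i)]
    · have := congrFun (congrFun T.2.1 i) j
      simp only [Matrix.IsSymm, Matrix.transpose_apply] at this
      simp only [dif_neg (asymm h), dif_pos h]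
      exact (congrFun (congrFun T.2.1 j) i).symm
  right_inv f := by
    ext p
    simp [dif_pos p.2]

lemma card_alt (n : ℕ) :
    Nat.card {T : Matrix (Fin n) (Fin n) (ZMod 2) // IsAlt2 T} = 2 ^ n.choose 2 := by
  rw [Nat.card_congr (altEquiv n), Nat.card_fun, Nat.card_eq_fintype_card (α := ZMod 2),
    ZMod.card, card_ltPair]

abbrev F2 := ZMod 2

lemma alt_dot {n : ℕ} {T : Matrix (Fin n) (Fin n) F2} (hT : IsAlt2 T) (x : Fin n → F2) :
    x ⬝ᵥ (T *ᵥ x) = 0 := by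
  have : x ⬝ᵥ (T *ᵥ x) = ∑ p ∈ univ ×ˢ univ, x p.1 * T p.1 p.2 * x p.2 := by
    rw [Finset.sum_product]
    simp [dotProduct, Matrix.mulVec, Finset.mul_sum, mul_assoc]
  rw [this]
  refine Finset.sum_involution (fun p _ => (p.2, p.1)) (fun p _ => ?_) (fun p _ hp => ?_)
    (fun p hp => Finset.mem_product.2 ⟨Finset.mem_univ _, Finset.mem_univ _⟩) (fun p _ => rfl)
  · have hsym : T p.2 p.1 = T p.1 p.2 := by
      conv_lhs => rw [← hT.1]
      rfl
    have : x p.2 * T p.2 p.1 * x p.1 = x p.1 * T p.1 p.2 * x p.2 := by rw [hsym]; ring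
    rw [this, CharTwo.add_self_eq_zero]
  · rintro h
    apply hp
    have : p.1 = p.2 := (Prod.ext_iff.1 h.symm).1
    rw [this, hT.2]
    ring

lemma congr_diag {n : ℕ} (A T : Matrix (Fin n) (Fin n) F2) (i : Fin n) :
    (Aᵀ * T * A) i i = (fun k => A k i) ⬝ᵥ (T *ᵥ fun k => A k i) := by
  simp [Matrix.mul_apply, dotProduct, Matrix.mulVec, Finset.mul_sum, Finset.sum_mul]
  rw [Finset.sum_comm]
  refine Finset.sum_congr rfl fun k _ => Finset.sum_congr rfl fun l _ => by ring

lemma congr_alt {n : ℕ} {T : Matrix (Fin n) (Fin n) F2} (hT : IsAlt2 T)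
    (A : Matrix (Fin n) (Fin n) F2) : IsAlt2 (Aᵀ * T * A) := by
  constructor
  · have : (Aᵀ * T * A)ᵀ = Aᵀ * Tᵀ * A := by
      rw [Matrix.transpose_mul, Matrix.transpose_mul, Matrix.transpose_transpose, Matrix.mul_assoc]
    rw [Matrix.IsSymm, this, hT.1]
  · intro i
    rw [congr_diag, alt_dot hT]

/-- Congruence by a linear automorphism gives a bijection on alternating matrices with
prescribed subspace in the kernel. -/
noncomputable def congrEquiv {n : ℕ} (e : (Fin n → F2) ≃ₗ[F2] (Fin n → F2))
    (W₀ : Submodule F2 (Fin n → F2)) :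
    {T : Matrix (Fin n) (Fin n) F2 // IsAlt2 T ∧ W₀.map e.toLinearMap ≤ LinearMap.ker T.mulVecLin} ≃
    {T : Matrix (Fin n) (Fin n) F2 // IsAlt2 T ∧ W₀ ≤ LinearMap.ker T.mulVecLin} := by
  classical
  set A := LinearMap.toMatrix' (e : (Fin n → F2) →ₗ[F2] (Fin n → F2)) with hA
  set B := LinearMap.toMatrix' (e.symm : (Fin n → F2) →ₗ[F2] (Fin n → F2)) with hB
  have hAB : A * B = 1 := by
    rw [hA, hB, ← LinearMap.toMatrix'_comp]
    simp
  have hBA : B * A = 1 := by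
    rw [hA, hB, ← LinearMap.toMatrix'_comp]
    simp
  have hAv : ∀ v, A *ᵥ v = e v := by
    intro v
    rw [hA, ← Matrix.toLin'_apply, Matrix.toLin'_toMatrix']
    rfl
  have hBv : ∀ v, B *ᵥ v = e.symm v := by
    intro v
    rw [hB, ← Matrix.toLin'_apply, Matrix.toLin'_toMatrix']
    rfl
  have hBt : Function.Injective (Bᵀ.mulVec) := by
    have : Invertible Bᵀ := ⟨Aᵀ, by rw [← Matrix.transpose_mul, hBA, Matrix.transpose_one],
      by rw [← Matrix.transpose_mul, hAB, Matrix.transpose_one]⟩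
    exact Matrix.mulVec_injective_of_invertible Bᵀ
  have hAt : Function.Injective (Aᵀ.mulVec) := by
    have : Invertible Aᵀ := ⟨Bᵀ, by rw [← Matrix.transpose_mul, hAB, Matrix.transpose_one],
      by rw [← Matrix.transpose_mul, hBA, Matrix.transpose_one]⟩
    exact Matrix.mulVec_injective_of_invertible Aᵀ
  have key : ∀ (T : Matrix (Fin n) (Fin n) F2) (v : Fin n → F2),
      (Aᵀ * T * A) *ᵥ v = Aᵀ *ᵥ (T *ᵥ (e v)) := by
    intro T v
    rw [← Matrix.mulVec_mulVec, ← Matrix.mulVec_mulVec, hAv]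
  have key2 : ∀ (T : Matrix (Fin n) (Fin n) F2),
      (W₀ ≤ LinearMap.ker (Aᵀ * T * A).mulVecLin ↔ W₀.map e.toLinearMap ≤ LinearMap.ker T.mulVecLin) := by
    intro T
    constructor
    · rintro h x ⟨y, hy, rfl⟩
      have := h hy
      rw [LinearMap.mem_ker, Matrix.mulVecLin_apply, key] at this
      have h0 : Aᵀ *ᵥ (T *ᵥ (e y)) = Aᵀ *ᵥ 0 := by rw [this, Matrix.mulVec_zero]
      exact LinearMap.mem_ker.2 (by simpa using hAt h0)
    · intro h x hx
      rw [LinearMap.mem_ker, Matrix.mulVecLin_apply, key]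
      have : e x ∈ W₀.map e.toLinearMap := ⟨x, hx, rfl⟩
      have := h this
      rw [LinearMap.mem_ker, Matrix.mulVecLin_apply] at this
      rw [this, Matrix.mulVec_zero]
  have keyB : ∀ (T : Matrix (Fin n) (Fin n) F2) (v : Fin n → F2),
      (Bᵀ * T * B) *ᵥ v = Bᵀ *ᵥ (T *ᵥ (e.symm v)) := by
    intro T v
    rw [← Matrix.mulVec_mulVec, ← Matrix.mulVec_mulVec, hBv]
  have key2B : ∀ (T : Matrix (Fin n) (Fin n) F2),
      (W₀.map e.toLinearMap ≤ LinearMap.ker (Bᵀ * T * B).mulVecLin ↔ W₀ ≤ LinearMap.ker T.mulVecLin) := by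
    intro T
    constructor
    · intro h x hx
      have hmem : e x ∈ W₀.map e.toLinearMap := ⟨x, hx, rfl⟩
      have := h hmem
      rw [LinearMap.mem_ker, Matrix.mulVecLin_apply, keyB, LinearEquiv.symm_apply_apply] at this
      have h0 : Bᵀ *ᵥ (T *ᵥ x) = Bᵀ *ᵥ 0 := by rw [this, Matrix.mulVec_zero]
      exact LinearMap.mem_ker.2 (by simpa using hBt h0)
    · intro h x hx
      rw [LinearMap.mem_ker, Matrix.mulVecLin_apply, keyB]
      have : e.symm x ∈ W₀ := by
        rcases hx with ⟨y, hy, rfl⟩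
        simpa using hy
      have := h this
      rw [LinearMap.mem_ker, Matrix.mulVecLin_apply] at this
      rw [this, Matrix.mulVec_zero]
  have hABt : Aᵀ * Bᵀ = 1 := by rw [← Matrix.transpose_mul, hBA, Matrix.transpose_one]
  have hBAt : Bᵀ * Aᵀ = 1 := by rw [← Matrix.transpose_mul, hAB, Matrix.transpose_one]
  refine ⟨fun T => ⟨Aᵀ * T.1 * A, congr_alt T.2.1 A, (key2 T.1).2 T.2.2⟩,
         fun T => ⟨Bᵀ * T.1 * B, congr_alt T.2.1 B, (key2B T.1).2 T.2.2⟩, fun T => ?_, fun T => ?_⟩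
  · ext : 1
    show Bᵀ * (Aᵀ * T.1 * A) * B = T.1
    calc Bᵀ * (Aᵀ * T.1 * A) * B = (Bᵀ * Aᵀ) * T.1 * (A * B) := by
          simp only [Matrix.mul_assoc]
      _ = T.1 := by rw [hBAt, hAB, Matrix.one_mul, Matrix.mul_one]
  · ext : 1
    show Aᵀ * (Bᵀ * T.1 * B) * A = T.1
    calc Aᵀ * (Bᵀ * T.1 * B) * A = (Aᵀ * Bᵀ) * T.1 * (B * A) := by
          simp only [Matrix.mul_assoc]
      _ = T.1 := by rw [hABt, hBA, Matrix.one_mul, Matrix.mul_one]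

/-- the standard coordinate subspace spanned by the first `r` coordinates -/
noncomputable def stdSub (n r : ℕ) (h : r ≤ n) : Submodule F2 (Fin n → F2) :=
  Submodule.span F2 (Set.range fun i : Fin r => Pi.single (⟨i.1, lt_of_lt_of_le i.2 h⟩ : Fin n) (1 : F2))

lemma stdSub_le_ker_iff {n r : ℕ} (h : r ≤ n) (T : Matrix (Fin n) (Fin n) F2) :
    stdSub n r h ≤ LinearMap.ker T.mulVecLin ↔
      ∀ (j : Fin n) (k : Fin r), T j (⟨k.1, lt_of_lt_of_le k.2 h⟩ : Fin n) = 0 := by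
  rw [stdSub, Submodule.span_le, Set.range_subset_iff]
  constructor
  · intro hh j k
    have := hh k
    rw [SetLike.mem_coe, LinearMap.mem_ker, Matrix.mulVecLin_apply, Matrix.mulVec_single_one] at this
    exact congrFun this j
  · intro hh k
    rw [SetLike.mem_coe, LinearMap.mem_ker, Matrix.mulVecLin_apply, Matrix.mulVec_single_one]
    ext j
    exact hh j k

/-- Alternating matrices with the first `r` columns zero are equivalent to alternating
`(n-r) × (n-r)` matrices. -/
def blockEquiv (n r : ℕ) (h : r ≤ n) :
    {T : Matrix (Fin n) (Fin n) F2 // IsAlt2 T ∧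
        ∀ (j : Fin n) (k : Fin r), T j (⟨k.1, lt_of_lt_of_le k.2 h⟩ : Fin n) = 0} ≃
    {S : Matrix (Fin (n - r)) (Fin (n - r)) F2 // IsAlt2 S} where
  toFun T := ⟨fun i j => T.1 ⟨r + i.1, by omega⟩ ⟨r + j.1, by omega⟩, by
    constructor
    · ext i j
      exact congrFun (congrFun T.2.1.1 _) _
    · intro i
      exact T.2.1.2 _⟩
  invFun S := ⟨fun a b =>
      if hab : r ≤ a.1 ∧ r ≤ b.1 then S.1 ⟨a.1 - r, by omega⟩ ⟨b.1 - r, by omega⟩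
        else 0, by
    refine ⟨⟨?_, ?_⟩, ?_⟩
    · ext a b
      show dite _ _ _ = dite _ _ _
      by_cases hab : r ≤ a.1 ∧ r ≤ b.1
      · rw [dif_pos hab, dif_pos (And.intro hab.2 hab.1)]
        exact congrFun (congrFun S.2.1 _) _
      · rw [dif_neg hab, dif_neg (fun hc => hab ⟨hc.2, hc.1⟩)]
    · intro a
      show dite _ _ _ = 0
      by_cases ha : r ≤ a.1 ∧ r ≤ a.1
      · rw [dif_pos ha]
        exact S.2.2 _
      · rw [dif_neg ha]
    · intro j k
      show dite _ _ _ = 0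
      have hk : ¬ (r ≤ j.1 ∧ r ≤ k.1) := fun hc => absurd hc.2 (Nat.not_le.2 k.2)
      rw [dif_neg hk]⟩
  left_inv T := by
    have hsymm : ∀ a b : Fin n, T.1 a b = T.1 b a := fun a b =>
      congrFun (congrFun T.2.1.1 b) a
    ext a b
    show dite _ _ _ = T.1 a b
    by_cases hab : r ≤ a.1 ∧ r ≤ b.1
    · rw [dif_pos hab]
      exact congrArg₂ T.1 (Fin.ext (by show r + (a.1 - r) = a.1; omega))
        (Fin.ext (by show r + (b.1 - r) = b.1; omega))
    · rw [dif_neg hab]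
      by_cases ha : r ≤ a.1
      · have hb : b.1 < r := by omega
        have hbeq : b = (⟨(⟨b.1, hb⟩ : Fin r).1, lt_of_lt_of_le (⟨b.1, hb⟩ : Fin r).2 h⟩ : Fin n) :=
          Fin.ext rfl
        rw [hbeq]
        exact (T.2.2 a ⟨b.1, hb⟩).symm
      · have ha' : a.1 < r := by omega
        rw [hsymm]
        have haeq : a = (⟨(⟨a.1, ha'⟩ : Fin r).1, lt_of_lt_of_le (⟨a.1, ha'⟩ : Fin r).2 h⟩ : Fin n) :=
          Fin.ext rfl
        rw [haeq]
        exact (T.2.2 b ⟨a.1, ha'⟩).symm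
  right_inv S := by
    ext i j
    show dite _ _ _ = S.1 i j
    have hij : r ≤ r + i.1 ∧ r ≤ r + j.1 := ⟨Nat.le_add_right _ _, Nat.le_add_right _ _⟩
    rw [dif_pos hij]
    exact congrArg₂ S.1 (Fin.ext (by show r + i.1 - r = i.1; omega))
      (Fin.ext (by show r + j.1 - r = j.1; omega))

lemma exists_equiv_map_stdSub {n : ℕ} (W : Submodule F2 (Fin n → F2))
    (h : Module.finrank F2 W ≤ n) :
    ∃ e : (Fin n → F2) ≃ₗ[F2] (Fin n → F2),
      (stdSub n (Module.finrank F2 W) h).map e.toLinearMap = W := by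
  classical
  set r := Module.finrank F2 W with hr
  obtain ⟨W', hc⟩ := Submodule.exists_isCompl W
  have hW' : Module.finrank F2 W' = n - r := by
    have := Submodule.finrank_add_eq_of_isCompl hc
    rw [Module.finrank_pi] at this
    simp only [Fintype.card_fin] at this
    omega
  let bW : Module.Basis (Fin r) F2 W := Module.finBasis F2 W
  let bW' : Module.Basis (Fin (n - r)) F2 W' := (Module.finBasis F2 W').reindex (finCongr hW')
  let bSum : Module.Basis (Fin r ⊕ Fin (n - r)) F2 (Fin n → F2) :=
    (bW.prod bW').map (Submodule.prodEquivOfIsCompl W W' hc)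
  let σ : Fin r ⊕ Fin (n - r) ≃ Fin n := finSumFinEquiv.trans (finCongr (by omega))
  let b : Module.Basis (Fin n) F2 (Fin n → F2) := bSum.reindex σ
  let e := (Pi.basisFun F2 (Fin n)).equiv b (Equiv.refl _)
  refine ⟨e, ?_⟩
  have hb : ∀ i : Fin r, b (⟨i.1, lt_of_lt_of_le i.2 h⟩ : Fin n) = (bW i : Fin n → F2) := by
    intro i
    have hσ : σ (Sum.inl i) = (⟨i.1, lt_of_lt_of_le i.2 h⟩ : Fin n) := by
      apply Fin.ext
      simp [σ]
    rw [← hσ]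
    show (bSum.reindex σ) (σ (Sum.inl i)) = _
    rw [Module.Basis.reindex_apply, Equiv.symm_apply_apply]
    show (Submodule.prodEquivOfIsCompl W W' hc) ((bW.prod bW') (Sum.inl i)) = _
    rw [Module.Basis.prod_apply]
    have hco : (Submodule.prodEquivOfIsCompl W W' hc) ((LinearMap.inl F2 W W') (bW i))
        = (W.subtype.coprod W'.subtype) ((LinearMap.inl F2 W W') (bW i)) := by
      rw [← Submodule.coe_prodEquivOfIsCompl]
      rfl
    simp only [Sum.elim_inl, Function.comp_apply]
    rw [hco]
    simp
  have he : ∀ i : Fin r,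
      e (Pi.single (⟨i.1, lt_of_lt_of_le i.2 h⟩ : Fin n) (1 : F2)) = (bW i : Fin n → F2) := by
    intro i
    have hP : Pi.single (⟨i.1, lt_of_lt_of_le i.2 h⟩ : Fin n) (1 : F2)
        = Pi.basisFun F2 (Fin n) ⟨i.1, lt_of_lt_of_le i.2 h⟩ := by
      simp [Pi.basisFun_apply]
    rw [hP]
    show ((Pi.basisFun F2 (Fin n)).equiv b (Equiv.refl _)) (Pi.basisFun F2 (Fin n) _) = _
    rw [Module.Basis.equiv_apply, Equiv.refl_apply, hb]
  rw [stdSub, Submodule.map_span, ← Set.range_comp]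
  have h1 : (⇑e.toLinearMap ∘ fun i : Fin r => Pi.single (⟨i.1, lt_of_lt_of_le i.2 h⟩ : Fin n) (1 : F2))
      = fun i : Fin r => (bW i : Fin n → F2) := by
    funext i
    exact he i
  rw [h1]
  have h2 : (Set.range fun i : Fin r => (bW i : Fin n → F2)) = W.subtype '' (Set.range bW) := by
    rw [← Set.range_comp]
    rfl
  rw [h2, ← Submodule.map_span, Module.Basis.span_eq, Submodule.map_top, Submodule.range_subtype]

lemma card_alt_ker {n : ℕ} (W : Submodule F2 (Fin n → F2)) :
    Nat.card {T : Matrix (Fin n) (Fin n) F2 // IsAlt2 T ∧ W ≤ LinearMap.ker T.mulVecLin} =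
      2 ^ ((n - Module.finrank F2 W).choose 2) := by
  have h : Module.finrank F2 W ≤ n := by
    have := W.finrank_le
    rwa [Module.finrank_pi, Fintype.card_fin] at this
  obtain ⟨e, he⟩ := exists_equiv_map_stdSub W h
  set r := Module.finrank F2 W
  have e1 : {T : Matrix (Fin n) (Fin n) F2 // IsAlt2 T ∧ W ≤ LinearMap.ker T.mulVecLin} ≃
      {T : Matrix (Fin n) (Fin n) F2 // IsAlt2 T ∧
        (stdSub n r h).map e.toLinearMap ≤ LinearMap.ker T.mulVecLin} :=
    Equiv.subtypeEquivRight (fun T => by rw [he])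
  have e2 := congrEquiv e (stdSub n r h)
  have e3 : {T : Matrix (Fin n) (Fin n) F2 // IsAlt2 T ∧
        stdSub n r h ≤ LinearMap.ker T.mulVecLin} ≃
      {T : Matrix (Fin n) (Fin n) F2 // IsAlt2 T ∧
        ∀ (j : Fin n) (k : Fin r), T j (⟨k.1, lt_of_lt_of_le k.2 h⟩ : Fin n) = 0} :=
    Equiv.subtypeEquivRight (fun T => by rw [stdSub_le_ker_iff])
  rw [Nat.card_congr (((e1.trans e2).trans e3).trans (blockEquiv n r h)), card_alt]

/-- `∏ i < r, (2^m - 2^i)`: the number of independent `r`-tuples in `F₂^m`,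
also the number of surjections `F₂^m → F₂^r`. -/
def Icount (m r : ℕ) : ℕ := ∏ i ∈ Finset.range r, (2 ^ m - 2 ^ i)

lemma card_linIndep_any (V : Type*) [AddCommGroup V] [Module F2 V] [Module.Finite F2 V]
    (k : ℕ) :
    Nat.card {s : Fin k → V // LinearIndependent F2 s} = Icount (Module.finrank F2 V) k := by
  have : Finite V := Module.finite_of_finite F2
  rcases le_or_gt k (Module.finrank F2 V) with hk | hk
  · rw [card_linearIndependent hk, Icount, ← Fin.prod_univ_eq_prod_range]
    simp [ZMod.card]
  · have hE : IsEmpty {s : Fin k → V // LinearIndependent F2 s} := by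
      constructor
      rintro ⟨s, hs⟩
      have := hs.fintype_card_le_finrank
      simp only [Fintype.card_fin] at this
      omega
    rw [Nat.card_of_isEmpty, Icount, Finset.prod_eq_zero (Finset.mem_range.2 hk)]
    omega

lemma span_coe_eq {V : Type*} [AddCommGroup V] [Module F2 V]
    (W : Submodule F2 V) {k : ℕ} (t : Fin k → W) (ht : LinearIndependent F2 t)
    (hW : Module.finrank F2 W = k) [Module.Finite F2 W] :
    Submodule.span F2 (Set.range fun i => (t i : V)) = W := by
  rcases Nat.eq_zero_or_pos k with rfl | hk
  · have hbot : W = ⊥ := Submodule.finrank_eq_zero.1 hW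
    subst hbot
    refine le_antisymm ?_ bot_le
    rw [Submodule.span_le]
    rintro x ⟨i, rfl⟩
    exact (t i).2
  · have : Nonempty (Fin k) := ⟨⟨0, hk⟩⟩
    have hcard : Fintype.card (Fin k) = Module.finrank F2 W := by simp [hW]
    let b := basisOfLinearIndependentOfCardEqFinrank ht hcard
    have hb : ⇑b = t := coe_basisOfLinearIndependentOfCardEqFinrank ht hcard
    have htop : Submodule.span F2 (Set.range t) = ⊤ := by rw [← hb, b.span_eq]
    have : (Set.range fun i => (t i : V)) = W.subtype '' (Set.range t) := by
      rw [← Set.range_comp]; rfl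
    rw [this, ← Submodule.map_span, htop, Submodule.map_top, Submodule.range_subtype]

/-- independent `k`-tuples with span `W` correspond to independent `k`-tuples valued in `W`,
when `finrank W = k`. -/
noncomputable def indepSpanEquiv {n k : ℕ} (W : Submodule F2 (Fin n → F2))
    (hW : Module.finrank F2 W = k) :
    {s : Fin k → (Fin n → F2) // LinearIndependent F2 s ∧ Submodule.span F2 (Set.range s) = W} ≃
    {t : Fin k → W // LinearIndependent F2 t} where
  toFun s := ⟨fun i => ⟨s.1 i, by
      have h0 : s.1 i ∈ Submodule.span F2 (Set.range s.1) :=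
        Submodule.subset_span (Set.mem_range_self i)
      rwa [s.2.2] at h0⟩, by
    apply LinearIndependent.of_comp W.subtype
    exact s.2.1⟩
  invFun t := ⟨fun i => (t.1 i : Fin n → F2),
    ⟨t.2.map' W.subtype (Submodule.ker_subtype W), span_coe_eq W t.1 t.2 hW⟩⟩
  left_inv s := Subtype.ext rfl
  right_inv t := Subtype.ext rfl

lemma card_finrank_mul (n r : ℕ) :
    Nat.card {W : Submodule F2 (Fin n → F2) // Module.finrank F2 W = r} * Icount r r =
      Icount n r := by
  classical
  have hfin : Finite (Submodule F2 (Fin n → F2)) :=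
    Finite.of_injective _ SetLike.coe_injective
  have key : Nat.card {s : Fin r → (Fin n → F2) // LinearIndependent F2 s} = Icount n r := by
    rw [card_linIndep_any]
    congr 1
    rw [Module.finrank_pi, Fintype.card_fin]
  rw [← key]
  symm
  let f : {s : Fin r → (Fin n → F2) // LinearIndependent F2 s} →
      {W : Submodule F2 (Fin n → F2) // Module.finrank F2 W = r} :=
    fun s => ⟨Submodule.span F2 (Set.range s.1), by
      rw [finrank_span_eq_card s.2, Fintype.card_fin]⟩
  letI := Fintype.ofFinite {W : Submodule F2 (Fin n → F2) // Module.finrank F2 W = r}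
  letI := Fintype.ofFinite {s : Fin r → (Fin n → F2) // LinearIndependent F2 s}
  have hfib : ∀ W' : {W : Submodule F2 (Fin n → F2) // Module.finrank F2 W = r},
      Nat.card {s' : {s : Fin r → (Fin n → F2) // LinearIndependent F2 s} // f s' = W'} =
        Icount r r := by
    intro W'
    have e1 : {s' : {s : Fin r → (Fin n → F2) // LinearIndependent F2 s} // f s' = W'} ≃
        {s' : {s : Fin r → (Fin n → F2) // LinearIndependent F2 s} //
          Submodule.span F2 (Set.range s'.1) = W'.1} :=
      Equiv.subtypeEquivRight (fun s' => by
        constructor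
        · intro h; rw [← h]
        · intro h; exact Subtype.ext h)
    have e2 : {s' : {s : Fin r → (Fin n → F2) // LinearIndependent F2 s} //
          Submodule.span F2 (Set.range s'.1) = W'.1} ≃
        {s : Fin r → (Fin n → F2) // LinearIndependent F2 s ∧
          Submodule.span F2 (Set.range s) = W'.1} :=
      Equiv.subtypeSubtypeEquivSubtypeInter (fun s : Fin r → (Fin n → F2) => LinearIndependent F2 s)
        (fun s => Submodule.span F2 (Set.range s) = W'.1)
    rw [Nat.card_congr ((e1.trans e2).trans (indepSpanEquiv W'.1 W'.2)),
      card_linIndep_any, W'.2]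
  calc Nat.card {s : Fin r → (Fin n → F2) // LinearIndependent F2 s}
      = Fintype.card (Σ W' : {W : Submodule F2 (Fin n → F2) // Module.finrank F2 W = r},
          {s' : {s : Fin r → (Fin n → F2) // LinearIndependent F2 s} // f s' = W'}) := by
        rw [Nat.card_eq_fintype_card]
        exact Fintype.card_congr (Equiv.sigmaFiberEquiv f).symm
    _ = ∑ W' : {W : Submodule F2 (Fin n → F2) // Module.finrank F2 W = r},
          Fintype.card {s' : {s : Fin r → (Fin n → F2) // LinearIndependent F2 s} // f s' = W'} :=
        by rw [Fintype.card_sigma]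
    _ = ∑ _W' : {W : Submodule F2 (Fin n → F2) // Module.finrank F2 W = r}, Icount r r := by
        refine Finset.sum_congr rfl fun W' _ => ?_
        rw [← Nat.card_eq_fintype_card, hfib W']
    _ = Nat.card {W : Submodule F2 (Fin n → F2) // Module.finrank F2 W = r} * Icount r r := by
        rw [Finset.sum_const, Nat.card_eq_fintype_card, smul_eq_mul, Finset.card_univ]

lemma surj_iff_inj_transpose {r m : ℕ} (A : Matrix (Fin r) (Fin m) F2) :
    Function.Surjective A.mulVecLin ↔ Function.Injective Aᵀ.mulVecLin := by
  have hdef : A.rank = Module.finrank F2 (LinearMap.range A.mulVecLin) := rfl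
  have hdefT : Aᵀ.rank = Module.finrank F2 (LinearMap.range Aᵀ.mulVecLin) := rfl
  have h1 : Function.Surjective A.mulVecLin ↔ A.rank = r := by
    rw [← LinearMap.range_eq_top, hdef]
    constructor
    · intro h; rw [h, finrank_top, Module.finrank_pi, Fintype.card_fin]
    · intro h
      apply Submodule.eq_top_of_finrank_eq
      rw [h, Module.finrank_pi, Fintype.card_fin]
  have h2 : Function.Injective Aᵀ.mulVecLin ↔ Aᵀ.rank = r := by
    rw [← LinearMap.ker_eq_bot, ← Submodule.finrank_eq_zero, hdefT]
    have hrn := LinearMap.finrank_range_add_finrank_ker Aᵀ.mulVecLin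
    rw [Module.finrank_pi, Fintype.card_fin] at hrn
    omega
  rw [h1, h2, Matrix.rank_transpose]

lemma card_span_eq (m : ℕ) {n : ℕ} (W : Submodule F2 (Fin n → F2)) :
    Nat.card {v : Fin m → (Fin n → F2) // Submodule.span F2 (Set.range v) = W} =
      Icount m (Module.finrank F2 W) := by
  classical
  set r := Module.finrank F2 W with hr
  -- tuples ↦ linear maps
  have e0 : {v : Fin m → (Fin n → F2) // Submodule.span F2 (Set.range v) = W} ≃
      {f : (Fin m → F2) →ₗ[F2] (Fin n → F2) // LinearMap.range f = W} :=
    Equiv.subtypeEquiv ((Pi.basisFun F2 (Fin m)).constr F2).toEquiv (fun v => by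
      rw [LinearEquiv.coe_toEquiv, Module.Basis.constr_range])
  -- linear maps with range W ↦ surjections onto W
  have e1 : {f : (Fin m → F2) →ₗ[F2] (Fin n → F2) // LinearMap.range f = W} ≃
      {g : (Fin m → F2) →ₗ[F2] W // Function.Surjective g} := by
    refine ⟨fun f => ⟨f.1.codRestrict W (fun x => by
        have hx := LinearMap.mem_range_self f.1 x
        rwa [f.2] at hx), ?_⟩,
      fun g => ⟨W.subtype ∘ₗ g.1, ?_⟩, fun f => Subtype.ext (by ext x; rfl),
      fun g => Subtype.ext (by ext x; rfl)⟩
    · rintro ⟨w, hw⟩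
      have : w ∈ LinearMap.range f.1 := f.2.symm ▸ hw
      obtain ⟨x, hx⟩ := this
      exact ⟨x, Subtype.ext hx⟩
    · rw [LinearMap.range_comp, LinearMap.range_eq_top.2 g.2, Submodule.map_top,
        Submodule.range_subtype]
  -- surjections onto W ↦ surjections onto F2^r
  let eW : W ≃ₗ[F2] (Fin r → F2) := LinearEquiv.ofFinrankEq _ _ (by
    rw [Module.finrank_pi, Fintype.card_fin])
  have e2 : {g : (Fin m → F2) →ₗ[F2] W // Function.Surjective g} ≃
      {g : (Fin m → F2) →ₗ[F2] (Fin r → F2) // Function.Surjective g} := by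
    refine ⟨fun g => ⟨eW.toLinearMap ∘ₗ g.1, eW.surjective.comp g.2⟩,
      fun g => ⟨eW.symm.toLinearMap ∘ₗ g.1, eW.symm.surjective.comp g.2⟩,
      fun g => Subtype.ext (by ext x; simp), fun g => Subtype.ext (by ext x; simp)⟩
  -- to matrices
  have e3 : {g : (Fin m → F2) →ₗ[F2] (Fin r → F2) // Function.Surjective g} ≃
      {A : Matrix (Fin r) (Fin m) F2 // Function.Surjective A.mulVecLin} :=
    Equiv.subtypeEquiv LinearMap.toMatrix'.toEquiv (fun g => by
      rw [LinearEquiv.coe_toEquiv]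
      constructor
      · intro h
        have : (LinearMap.toMatrix' g).mulVecLin = g := by
          refine LinearMap.ext fun v => ?_
          rw [Matrix.mulVecLin_apply, ← Matrix.toLin'_apply, Matrix.toLin'_toMatrix']
        rw [this]; exact h
      · intro h
        have : (LinearMap.toMatrix' g).mulVecLin = g := by
          refine LinearMap.ext fun v => ?_
          rw [Matrix.mulVecLin_apply, ← Matrix.toLin'_apply, Matrix.toLin'_toMatrix']
        rw [← this]; exact h)
  -- transpose
  have e4 : {A : Matrix (Fin r) (Fin m) F2 // Function.Surjective A.mulVecLin} ≃
      {B : Matrix (Fin m) (Fin r) F2 // Function.Injective B.mulVecLin} :=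
    ⟨fun A => ⟨A.1ᵀ, (surj_iff_inj_transpose A.1).1 A.2⟩,
     fun B => ⟨B.1ᵀ, by
       have := (surj_iff_inj_transpose B.1ᵀ).2
       rw [Matrix.transpose_transpose] at this
       exact this B.2⟩,
     fun A => Subtype.ext (Matrix.transpose_transpose _),
     fun B => Subtype.ext (Matrix.transpose_transpose _)⟩
  -- columns
  have e5 : {B : Matrix (Fin m) (Fin r) F2 // Function.Injective B.mulVecLin} ≃
      {s : Fin r → (Fin m → F2) // LinearIndependent F2 s} :=
    ⟨fun B => ⟨fun i => B.1ᵀ i, by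
        have := B.2
        rw [Matrix.coe_mulVecLin, Matrix.mulVec_injective_iff] at this
        exact this⟩,
     fun s => ⟨(Matrix.of s.1)ᵀ, by
        rw [Matrix.coe_mulVecLin, Matrix.mulVec_injective_iff]
        exact s.2⟩,
     fun B => Subtype.ext (Matrix.transpose_transpose _),
     fun s => Subtype.ext rfl⟩
  rw [Nat.card_congr ((((e0.trans e1).trans e2).trans e3).trans (e4.trans e5)),
    card_linIndep_any, Module.finrank_pi, Fintype.card_fin]

lemma corank_card {n : ℕ} (T : Matrix (Fin n) (Fin n) F2) (m : ℕ) :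
    Nat.card {v : Fin m → (Fin n → F2) //
        Submodule.span F2 (Set.range v) ≤ LinearMap.ker T.mulVecLin} =
      2 ^ (m * Module.finrank F2 (LinearMap.ker T.mulVecLin)) := by
  classical
  set K := LinearMap.ker T.mulVecLin
  have e1 : {v : Fin m → (Fin n → F2) // Submodule.span F2 (Set.range v) ≤ K} ≃
      {v : Fin m → (Fin n → F2) // ∀ i, v i ∈ K} :=
    Equiv.subtypeEquivRight (fun v => by
      rw [Submodule.span_le, Set.range_subset_iff]
      rfl)
  have e2 : {v : Fin m → (Fin n → F2) // ∀ i, v i ∈ K} ≃ (Fin m → K) :=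
    Equiv.subtypePiEquivPi
  rw [Nat.card_congr (e1.trans e2), Nat.card_fun]
  have hK : Nat.card K = 2 ^ Module.finrank F2 K := by
    rw [Nat.card_eq_fintype_card, Module.card_eq_pow_finrank (K := F2) (V := K), ZMod.card]
  rw [hK, Nat.card_eq_fintype_card, Fintype.card_fin, ← pow_mul, mul_comm]

lemma numerator_eq (m n : ℕ) :
    ∑ j ∈ Finset.range (n + 1), 2 ^ (m * j) *
        Nat.card {T : Matrix (Fin n) (Fin n) F2 //
          IsAlt2 T ∧ Module.finrank F2 (LinearMap.ker T.mulVecLin) = j} =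
    ∑ r ∈ Finset.range (n + 1),
      Nat.card {W : Submodule F2 (Fin n → F2) // Module.finrank F2 W = r} *
        Icount m r * 2 ^ ((n - r).choose 2) := by
  classical
  have hfinSub : Finite (Submodule F2 (Fin n → F2)) :=
    Finite.of_injective _ SetLike.coe_injective
  letI : Fintype (Submodule F2 (Fin n → F2)) := Fintype.ofFinite _
  letI : Fintype {T : Matrix (Fin n) (Fin n) F2 // IsAlt2 T} := Fintype.ofFinite _
  set AltT := {T : Matrix (Fin n) (Fin n) F2 // IsAlt2 T} with hAltT
  let corank : AltT → ℕ := fun T => Module.finrank F2 (LinearMap.ker T.1.mulVecLin)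
  have hcorank_le : ∀ T : AltT, corank T ≤ n := by
    intro T
    have := Submodule.finrank_le (LinearMap.ker T.1.mulVecLin)
    rwa [Module.finrank_pi, Fintype.card_fin] at this
  have hrank_le : ∀ W : Submodule F2 (Fin n → F2), Module.finrank F2 W ≤ n := by
    intro W
    have := Submodule.finrank_le W
    rwa [Module.finrank_pi, Fintype.card_fin] at this
  calc ∑ j ∈ Finset.range (n + 1), 2 ^ (m * j) *
        Nat.card {T : Matrix (Fin n) (Fin n) F2 //
          IsAlt2 T ∧ Module.finrank F2 (LinearMap.ker T.mulVecLin) = j}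
      = ∑ j ∈ Finset.range (n + 1),
          ∑ T ∈ Finset.univ.filter (fun T : AltT => corank T = j), 2 ^ (m * corank T) := by
        refine Finset.sum_congr rfl fun j _ => ?_
        rw [Finset.sum_congr rfl (fun T hT => by rw [(Finset.mem_filter.1 hT).2]),
          Finset.sum_const, smul_eq_mul, mul_comm]
        congr 1
        rw [Nat.card_congr (Equiv.subtypeSubtypeEquivSubtypeInter IsAlt2
          (fun T => Module.finrank F2 (LinearMap.ker T.mulVecLin) = j)).symm,
          Nat.card_eq_fintype_card, Fintype.card_subtype]
    _ = ∑ T : AltT, 2 ^ (m * corank T) := by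
        rw [Finset.sum_fiberwise_eq_sum_filter, Finset.filter_true_of_mem]
        intro T _
        rw [Finset.mem_range]
        exact Nat.lt_succ_of_le (hcorank_le T)
    _ = ∑ T : AltT, Nat.card {v : Fin m → (Fin n → F2) //
          Submodule.span F2 (Set.range v) ≤ LinearMap.ker T.1.mulVecLin} := by
        refine Finset.sum_congr rfl fun T _ => ?_
        rw [corank_card]
    _ = ∑ T : AltT, ∑ v : Fin m → (Fin n → F2),
          if Submodule.span F2 (Set.range v) ≤ LinearMap.ker T.1.mulVecLin then 1 else 0 := by
        refine Finset.sum_congr rfl fun T _ => ?_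
        rw [Nat.card_eq_fintype_card, Fintype.card_subtype, Finset.card_filter]
    _ = ∑ v : Fin m → (Fin n → F2), ∑ T : AltT,
          if Submodule.span F2 (Set.range v) ≤ LinearMap.ker T.1.mulVecLin then 1 else 0 :=
        Finset.sum_comm
    _ = ∑ v : Fin m → (Fin n → F2),
          2 ^ ((n - Module.finrank F2 (Submodule.span F2 (Set.range v))).choose 2) := by
        refine Finset.sum_congr rfl fun v _ => ?_
        rw [← Finset.card_filter, ← Fintype.card_subtype, ← Nat.card_eq_fintype_card,
          Nat.card_congr (Equiv.subtypeSubtypeEquivSubtypeInter IsAlt2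
            (fun T => Submodule.span F2 (Set.range v) ≤ LinearMap.ker T.mulVecLin)),
          card_alt_ker]
    _ = ∑ W : Submodule F2 (Fin n → F2),
          ∑ v ∈ Finset.univ.filter
            (fun v : Fin m → (Fin n → F2) => Submodule.span F2 (Set.range v) = W),
          2 ^ ((n - Module.finrank F2 (Submodule.span F2 (Set.range v))).choose 2) := by
        exact (Finset.sum_fiberwise Finset.univ
          (fun v : Fin m → (Fin n → F2) => Submodule.span F2 (Set.range v))
          (fun v => 2 ^ ((n - Module.finrank F2 (Submodule.span F2 (Set.range v))).choose 2))).symm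
    _ = ∑ W : Submodule F2 (Fin n → F2),
          Icount m (Module.finrank F2 W) * 2 ^ ((n - Module.finrank F2 W).choose 2) := by
        refine Finset.sum_congr rfl fun W _ => ?_
        rw [Finset.sum_congr rfl (fun v hv => by rw [(Finset.mem_filter.1 hv).2]),
          Finset.sum_const, smul_eq_mul]
        congr 1
        rw [← card_span_eq m W, Nat.card_eq_fintype_card, Fintype.card_subtype]
    _ = ∑ r ∈ Finset.range (n + 1),
          ∑ W ∈ Finset.univ.filter
            (fun W : Submodule F2 (Fin n → F2) => Module.finrank F2 W = r),
          Icount m (Module.finrank F2 W) * 2 ^ ((n - Module.finrank F2 W).choose 2) := by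
        symm
        rw [Finset.sum_fiberwise_eq_sum_filter, Finset.filter_true_of_mem
          (fun W _ => Finset.mem_range.2 (Nat.lt_succ_of_le (hrank_le W)))]
    _ = ∑ r ∈ Finset.range (n + 1),
          Nat.card {W : Submodule F2 (Fin n → F2) // Module.finrank F2 W = r} *
            Icount m r * 2 ^ ((n - r).choose 2) := by
        refine Finset.sum_congr rfl fun r _ => ?_
        rw [Finset.sum_congr rfl (fun W hW => by rw [(Finset.mem_filter.1 hW).2]),
          Finset.sum_const, smul_eq_mul, Nat.card_eq_fintype_card, Fintype.card_subtype,
          mul_assoc]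

lemma choose_two_add (a r : ℕ) : (a + r).choose 2 = a.choose 2 + r * a + r.choose 2 := by
  induction r with
  | zero => simp
  | succ r ih =>
    have h1 : (a + (r + 1)) = (a + r) + 1 := by ring
    have h2 : ((a + r) + 1).choose 2 = (a + r).choose 2 + (a + r) := by
      rw [Nat.choose_succ_succ]
      simp [Nat.choose_one_right, Nat.add_comm]
    have h3 : (r + 1).choose 2 = r.choose 2 + r := by
      rw [Nat.choose_succ_succ]
      simp [Nat.choose_one_right, Nat.add_comm]
    rw [h1, h2, ih, h3]
    ring

lemma choose_two_sq (r : ℕ) : (r + 1).choose 2 + r.choose 2 = r * r := by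
  induction r with
  | zero => simp
  | succ r ih =>
    have h2 : (r + 2).choose 2 = (r + 1).choose 2 + (r + 1) := by
      rw [show r + 2 = (r + 1) + 1 by ring, Nat.choose_succ_succ]
      simp [Nat.choose_one_right, Nat.add_comm]
    have h3 : (r + 1).choose 2 = r.choose 2 + r := by
      rw [Nat.choose_succ_succ]
      simp [Nat.choose_one_right, Nat.add_comm]
    calc (r + 1 + 1).choose 2 + (r + 1).choose 2
        = ((r + 1).choose 2 + (r + 1)) + (r.choose 2 + r) := by rw [h2, h3]
      _ = ((r + 1).choose 2 + r.choose 2) + (2 * r + 1) := by ring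
      _ = r * r + (2 * r + 1) := by rw [ih]
      _ = (r + 1) * (r + 1) := by ring

lemma exp_identity {r n : ℕ} (h : r ≤ n) :
    r * n + (n - r).choose 2 = (r + 1).choose 2 + n.choose 2 := by
  have hrn : r * n = r * r + r * (n - r) := by
    rw [← Nat.mul_add, Nat.add_sub_cancel' h]
  have hL1 : n.choose 2 = (n - r).choose 2 + r * (n - r) + r.choose 2 := by
    have := choose_two_add (n - r) r
    rwa [Nat.sub_add_cancel h] at this
  calc r * n + (n - r).choose 2 = (r * r + r * (n - r)) + (n - r).choose 2 := by rw [hrn]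
    _ = (((r+1).choose 2 + r.choose 2) + r * (n - r)) + (n - r).choose 2 := by
        rw [choose_two_sq]
    _ = (r+1).choose 2 + ((n - r).choose 2 + r * (n - r) + r.choose 2) := by ring
    _ = (r+1).choose 2 + n.choose 2 := by rw [← hL1]

lemma Icount_pos (r : ℕ) : 0 < Icount r r := by
  rw [Icount]
  apply Finset.prod_pos
  intro i hi
  have := Finset.mem_range.1 hi
  have h2 : 2 ^ i < 2 ^ r := Nat.pow_lt_pow_right (by norm_num) this
  omega

lemma Icount_zero_of_gt {m r : ℕ} (h : m < r) : Icount m r = 0 := by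
  rw [Icount]
  apply Finset.prod_eq_zero (Finset.mem_range.2 h)
  omega

lemma Icount_cast (m r : ℕ) (h : r ≤ m) :
    ((Icount m r : ℕ) : ℝ) = ∏ i ∈ Finset.range r, ((2:ℝ) ^ m - 2 ^ i) := by
  rw [Icount, Nat.cast_prod]
  refine Finset.prod_congr rfl fun i hi => ?_
  have hi' := Finset.mem_range.1 hi
  have hle : 2 ^ i ≤ 2 ^ m := Nat.pow_le_pow_right (by norm_num) (by omega)
  push_cast [Nat.cast_sub hle]
  ring

lemma prod_ratio_tendsto (r : ℕ) :
    Filter.Tendsto (fun n : ℕ => ∏ i ∈ Finset.range r, (1 - (2:ℝ) ^ i / 2 ^ n))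
      Filter.atTop (nhds 1) := by
  have h1 : (1:ℝ) = ∏ _i ∈ Finset.range r, (1:ℝ) := by simp
  rw [h1]
  refine tendsto_finset_prod _ fun i _ => ?_
  have h0 : Filter.Tendsto (fun n : ℕ => (2:ℝ) ^ i / 2 ^ n) Filter.atTop (nhds 0) := by
    have : (fun n : ℕ => (2:ℝ) ^ i / 2 ^ n) = fun n : ℕ => (2:ℝ) ^ i * (1/2 : ℝ) ^ n := by
      funext n
      rw [div_pow, one_pow, mul_comm, div_mul_eq_mul_div, one_mul]
    rw [this]
    have := (tendsto_pow_atTop_nhds_zero_of_lt_one (by norm_num : (0:ℝ) ≤ 1/2)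
      (by norm_num : (1/2:ℝ) < 1)).const_mul ((2:ℝ) ^ i)
    simpa using this
  have := h0.const_sub 1
  simpa using this

lemma term_tendsto (m r : ℕ) (hr : r ≤ m) :
    Filter.Tendsto (fun n : ℕ =>
      ((Nat.card {W : Submodule F2 (Fin n → F2) // Module.finrank F2 W = r} *
        Icount m r * 2 ^ ((n - r).choose 2) : ℕ) : ℝ) / (2:ℝ) ^ (n.choose 2))
      Filter.atTop
      (nhds ((Nat.card {W : Submodule F2 (Fin m → F2) // Module.finrank F2 W = r} : ℝ) *
        (2:ℝ) ^ (r * (r + 1) / 2))) := by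
  have hIc : ((Icount r r : ℕ) : ℝ) ≠ 0 := by
    exact_mod_cast (Icount_pos r).ne'
  set C : ℝ := (2:ℝ) ^ ((r+1).choose 2) * (Icount m r : ℝ) / (Icount r r : ℝ) with hC
  have key : ∀ n : ℕ, m ≤ n →
      ((Nat.card {W : Submodule F2 (Fin n → F2) // Module.finrank F2 W = r} *
        Icount m r * 2 ^ ((n - r).choose 2) : ℕ) : ℝ) / (2:ℝ) ^ (n.choose 2) =
      (∏ i ∈ Finset.range r, (1 - (2:ℝ) ^ i / 2 ^ n)) * C := by
    intro n hn
    have hrn : r ≤ n := hr.trans hn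
    have hG : ((Nat.card {W : Submodule F2 (Fin n → F2) // Module.finrank F2 W = r} : ℕ) : ℝ) *
        ((Icount r r : ℕ) : ℝ) = ((Icount n r : ℕ) : ℝ) := by
      exact_mod_cast congrArg (Nat.cast (R := ℝ)) (card_finrank_mul n r)
    have hprod : ((Icount n r : ℕ) : ℝ) =
        (∏ i ∈ Finset.range r, (1 - (2:ℝ) ^ i / 2 ^ n)) * 2 ^ (r * n) := by
      rw [Icount_cast n r hrn]
      have h2n : (2:ℝ) ^ (r * n) = ∏ _i ∈ Finset.range r, (2:ℝ) ^ n := by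
        rw [Finset.prod_const, Finset.card_range, ← pow_mul, mul_comm]
      rw [h2n, ← Finset.prod_mul_distrib]
      refine Finset.prod_congr rfl fun i _ => ?_
      have : (2:ℝ) ^ n ≠ 0 := by positivity
      field_simp
    have hexp : (2:ℝ) ^ (r * n) * 2 ^ ((n - r).choose 2) =
        2 ^ ((r+1).choose 2) * 2 ^ (n.choose 2) := by
      rw [← pow_add, ← pow_add, exp_identity hrn]
    have h2 : ((2:ℝ)) ^ (n.choose 2) ≠ 0 := by positivity
    rw [hC]
    push_cast
    rw [div_eq_iff h2]
    have expand : (∏ i ∈ Finset.range r, (1 - (2:ℝ) ^ i / 2 ^ n)) *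
        ((2:ℝ) ^ ((r+1).choose 2) * (Icount m r : ℝ) / (Icount r r : ℝ)) * 2 ^ (n.choose 2) *
        ((Icount r r : ℕ) : ℝ) =
        (∏ i ∈ Finset.range r, (1 - (2:ℝ) ^ i / 2 ^ n)) *
        ((2:ℝ) ^ ((r+1).choose 2) * (Icount m r : ℝ)) * 2 ^ (n.choose 2) := by
      push_cast
      field_simp
    apply mul_right_cancel₀ hIc
    rw [expand]
    calc ((Nat.card {W : Submodule F2 (Fin n → F2) // Module.finrank F2 W = r} : ℝ) *
          (Icount m r : ℝ) * (2:ℝ) ^ ((n - r).choose 2)) * ((Icount r r : ℕ) : ℝ)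
        = (((Nat.card {W : Submodule F2 (Fin n → F2) // Module.finrank F2 W = r} : ℕ) : ℝ) *
            ((Icount r r : ℕ) : ℝ)) * (Icount m r : ℝ) * (2:ℝ) ^ ((n - r).choose 2) := by
          push_cast; ring
      _ = ((Icount n r : ℕ) : ℝ) * (Icount m r : ℝ) * (2:ℝ) ^ ((n - r).choose 2) := by
          rw [hG]
      _ = ((∏ i ∈ Finset.range r, (1 - (2:ℝ) ^ i / 2 ^ n)) * 2 ^ (r * n)) * (Icount m r : ℝ) *
            (2:ℝ) ^ ((n - r).choose 2) := by rw [hprod]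
      _ = (∏ i ∈ Finset.range r, (1 - (2:ℝ) ^ i / 2 ^ n)) * (Icount m r : ℝ) *
            ((2:ℝ) ^ (r * n) * 2 ^ ((n - r).choose 2)) := by ring
      _ = (∏ i ∈ Finset.range r, (1 - (2:ℝ) ^ i / 2 ^ n)) * (Icount m r : ℝ) *
            ((2:ℝ) ^ ((r+1).choose 2) * 2 ^ (n.choose 2)) := by rw [hexp]
      _ = (∏ i ∈ Finset.range r, (1 - (2:ℝ) ^ i / 2 ^ n)) *
            ((2:ℝ) ^ ((r+1).choose 2) * (Icount m r : ℝ)) * 2 ^ (n.choose 2) := by ring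
  have hlim : Filter.Tendsto (fun n : ℕ =>
      (∏ i ∈ Finset.range r, (1 - (2:ℝ) ^ i / 2 ^ n)) * C) Filter.atTop (nhds (1 * C)) :=
    (prod_ratio_tendsto r).mul_const C
  rw [one_mul] at hlim
  have hCval : C = (Nat.card {W : Submodule F2 (Fin m → F2) // Module.finrank F2 W = r} : ℝ) *
      (2:ℝ) ^ (r * (r + 1) / 2) := by
    have hGm : ((Nat.card {W : Submodule F2 (Fin m → F2) // Module.finrank F2 W = r} : ℕ) : ℝ) *
        ((Icount r r : ℕ) : ℝ) = ((Icount m r : ℕ) : ℝ) := by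
      exact_mod_cast congrArg (Nat.cast (R := ℝ)) (card_finrank_mul m r)
    have hch : r * (r + 1) / 2 = (r + 1).choose 2 := by
      rw [Nat.choose_two_right]
      simp [Nat.mul_comm]
    rw [hC, hch, ← hGm]
    field_simp
  rw [← hCval]
  refine Filter.Tendsto.congr' ?_ hlim
  filter_upwards [Filter.eventually_ge_atTop m] with n hn
  exact (key n hn).symm


/-- With `P(j|n)` the probability that a uniformly random alternating `n × n` matrix over
`𝔽₂` has kernel of dimension `j`, we have
`lim_{n→∞} Σ_{j=0}^{n} 2^{mj} P(j|n) = Σ_{j=0}^{m} gr₂(j, m) · 2^{j(j+1)/2}`. -/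
theorem stmt_5 (m : ℕ) :
    Filter.Tendsto (fun n : ℕ =>
      ∑ j ∈ Finset.range (n + 1), (2 : ℝ) ^ (m * j) *
        ((Nat.card {T : Matrix (Fin n) (Fin n) (ZMod 2) //
            IsAlt2 T ∧ Module.finrank (ZMod 2) (LinearMap.ker T.mulVecLin) = j} : ℝ) /
          (Nat.card {T : Matrix (Fin n) (Fin n) (ZMod 2) // IsAlt2 T} : ℝ)))
      Filter.atTop
      (nhds (∑ j ∈ Finset.range (m + 1),
        (Nat.card {W : Submodule (ZMod 2) (Fin m → ZMod 2) //
            Module.finrank (ZMod 2) W = j} : ℝ) * (2 : ℝ) ^ (j * (j + 1) / 2))) := by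
  classical
  have hsum := tendsto_finset_sum (f := fun (r : ℕ) (n : ℕ) =>
      ((Nat.card {W : Submodule F2 (Fin n → F2) // Module.finrank F2 W = r} *
        Icount m r * 2 ^ ((n - r).choose 2) : ℕ) : ℝ) / (2:ℝ) ^ (n.choose 2))
    (Finset.range (m + 1)) (fun r hr =>
      term_tendsto m r (Nat.lt_succ_iff.1 (Finset.mem_range.1 hr)))
  refine Filter.Tendsto.congr' ?_ hsum
  filter_upwards [Filter.eventually_ge_atTop m] with n hn
  have hD : ((Nat.card {T : Matrix (Fin n) (Fin n) (ZMod 2) // IsAlt2 T} : ℕ) : ℝ) =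
      (2:ℝ) ^ (n.choose 2) := by
    exact_mod_cast congrArg (Nat.cast (R := ℝ)) (card_alt n)
  calc ∑ r ∈ Finset.range (m + 1),
        ((Nat.card {W : Submodule F2 (Fin n → F2) // Module.finrank F2 W = r} *
          Icount m r * 2 ^ ((n - r).choose 2) : ℕ) : ℝ) / (2:ℝ) ^ (n.choose 2)
      = ((∑ r ∈ Finset.range (m + 1),
          (Nat.card {W : Submodule F2 (Fin n → F2) // Module.finrank F2 W = r} *
            Icount m r * 2 ^ ((n - r).choose 2)) : ℕ) : ℝ) / (2:ℝ) ^ (n.choose 2) := by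
        rw [Nat.cast_sum, Finset.sum_div]
    _ = ((∑ r ∈ Finset.range (n + 1),
          (Nat.card {W : Submodule F2 (Fin n → F2) // Module.finrank F2 W = r} *
            Icount m r * 2 ^ ((n - r).choose 2)) : ℕ) : ℝ) / (2:ℝ) ^ (n.choose 2) := by
        congr 1
        norm_cast
        refine Finset.sum_subset (Finset.range_subset_range.2 (by omega)) fun r _ hr => ?_
        have hmr : m < r := by
          rcases Nat.lt_or_ge m r with h | h
          · exact h
          · exact absurd (Finset.mem_range.2 (by omega)) hr
        rw [Icount_zero_of_gt hmr, Nat.mul_zero, Nat.zero_mul]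
    _ = ((∑ j ∈ Finset.range (n + 1), 2 ^ (m * j) *
          Nat.card {T : Matrix (Fin n) (Fin n) F2 //
            IsAlt2 T ∧ Module.finrank F2 (LinearMap.ker T.mulVecLin) = j} : ℕ) : ℝ) /
          (2:ℝ) ^ (n.choose 2) := by
        rw [numerator_eq]
    _ = ∑ j ∈ Finset.range (n + 1), (2 : ℝ) ^ (m * j) *
        ((Nat.card {T : Matrix (Fin n) (Fin n) (ZMod 2) //
            IsAlt2 T ∧ Module.finrank (ZMod 2) (LinearMap.ker T.mulVecLin) = j} : ℝ) /
          (Nat.card {T : Matrix (Fin n) (Fin n) (ZMod 2) // IsAlt2 T} : ℝ)) := by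
        rw [Nat.cast_sum, Finset.sum_div]
        refine Finset.sum_congr rfl fun j _ => ?_
        rw [hD]
        push_cast
        ring
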